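/- For any matrices A_1, ..., A_{p+1} in gl(n, ℂ) with A_1 + ⋯ + A_{p+1} = 0 that form an irreducible tuple, and for any b_1, ..., b_{p+1} ∈ ℂ with b_1 + ⋯ + b_{p+1} = 0, one has rank(A_1 − b_1 I) + ⋯ + rank(A_{p+1} − b_{p+1} I) ≥ 2n. -/

import Mathlib

open Matrix

theorem stmt16 (p n : ℕ) (hn : 2 ≤ n) (A : Fin (p + 1) → Matrix (Fin n) (Fin n) ℂ)
    (hsum : ∑ j, A j = 0)
    (hirr : ∀ V : Submodule ℂ (Fin n → ℂ),
      (∀ j, ∀ v ∈ V, Matrix.toLin' (A j) v ∈ V) → V = ⊥ ∨ V = ⊤)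
    (b : Fin (p + 1) → ℂ) (hbs : ∑ j, b j = 0) :
    2 * n ≤ ∑ j, (A j - b j • (1 : Matrix (Fin n) (Fin n) ℂ)).rank := by
  classical
  have hn0 : 0 < n := by omega
  set f : Fin (p + 1) → ((Fin n → ℂ) →ₗ[ℂ] (Fin n → ℂ)) :=
    fun j => (A j - b j • (1 : Matrix (Fin n) (Fin n) ℂ)).mulVecLin with hf
  have hfapply : ∀ j v, f j v = Matrix.toLin' (A j) v - b j • v := by
    intro j v
    simp [hf, Matrix.sub_mulVec, Matrix.smul_mulVec, Matrix.one_mulVec,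
      Matrix.toLin'_apply]
  have hAapply : ∀ j v, Matrix.toLin' (A j) v = f j v + b j • v := by
    intro j v; rw [hfapply]; abel
  -- sum of the f j is zero
  have hfsum : ∀ v, ∑ j, f j v = 0 := by
    intro v
    have h2 : ∑ j, Matrix.toLin' (A j) v = 0 := by
      have h3 : Matrix.toLin' (∑ j, A j) v = 0 := by rw [hsum]; simp
      rw [map_sum] at h3
      simpa using h3
    calc ∑ j, f j v = ∑ j, (Matrix.toLin' (A j) v - b j • v) :=
          Finset.sum_congr rfl (fun j _ => hfapply j v)
    _ = (∑ j, Matrix.toLin' (A j) v) - ∑ j, b j • v := Finset.sum_sub_distrib _ _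
    _ = 0 - (∑ j, b j) • v := by rw [h2, Finset.sum_smul]
    _ = 0 := by rw [hbs]; simp
  -- not all f j are zero
  have hne : ¬ ∀ j, f j = 0 := by
    intro hall
    set e : Fin n → ℂ := Pi.single (⟨0, hn0⟩ : Fin n) (1 : ℂ) with he
    have he0 : e ≠ 0 := by
      intro h
      have := congrFun h (⟨0, hn0⟩ : Fin n)
      simp [he] at this
    have hinv : ∀ j, ∀ v ∈ (ℂ ∙ e), Matrix.toLin' (A j) v ∈ (ℂ ∙ e) := by
      intro j v hv
      rw [hAapply, hall j]
      simpa using Submodule.smul_mem _ (b j) hv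
    rcases hirr _ hinv with h | h
    · have : e ∈ (⊥ : Submodule ℂ (Fin n → ℂ)) := h ▸ Submodule.mem_span_singleton_self e
      exact he0 ((Submodule.mem_bot ℂ).mp this)
    · have h1 : Module.finrank ℂ (ℂ ∙ e) = 1 := finrank_span_singleton he0
      rw [h, finrank_top, Module.finrank_pi] at h1
      simp at h1
      omega
  -- the intersection of the kernels is trivial
  have hker : (⨅ j, LinearMap.ker (f j)) = ⊥ := by
    have hinv : ∀ j, ∀ v ∈ (⨅ j, LinearMap.ker (f j)),
        Matrix.toLin' (A j) v ∈ (⨅ j, LinearMap.ker (f j)) := by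
      intro j v hv
      simp only [Submodule.mem_iInf, LinearMap.mem_ker] at hv ⊢
      intro k
      rw [hAapply, hv j, zero_add, LinearMap.map_smul, hv k, smul_zero]
    rcases hirr _ hinv with h | h
    · exact h
    · exfalso
      apply hne
      intro j
      apply LinearMap.ext
      intro v
      have hv : v ∈ (⨅ j, LinearMap.ker (f j)) := by rw [h]; exact Submodule.mem_top
      simp only [Submodule.mem_iInf, LinearMap.mem_ker] at hv
      simpa using hv j
  -- the sum of the ranges is everything
  have hrange : (⨆ j, LinearMap.range (f j)) = ⊤ := by
    have hinv : ∀ j, ∀ v ∈ (⨆ j, LinearMap.range (f j)),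
        Matrix.toLin' (A j) v ∈ (⨆ j, LinearMap.range (f j)) := by
      intro j v hv
      rw [hAapply]
      refine Submodule.add_mem _ ?_ (Submodule.smul_mem _ _ hv)
      exact Submodule.mem_iSup_of_mem j (LinearMap.mem_range_self _ v)
    rcases hirr _ hinv with h | h
    · exfalso
      apply hne
      intro j
      have : LinearMap.range (f j) = ⊥ :=
        le_bot_iff.mp (h ▸ le_iSup (fun j => LinearMap.range (f j)) j)
      exact LinearMap.range_eq_bot.mp this
    · exact h
  -- the injective map g : ℂⁿ → Π j, range (f j)
  set g : (Fin n → ℂ) →ₗ[ℂ] (∀ j, LinearMap.range (f j)) :=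
    LinearMap.pi (fun j => (f j).rangeRestrict) with hg
  have hgk : ∀ v k, ((g v k : Fin n → ℂ)) = f k v := fun v k => rfl
  have hginj : Function.Injective g := by
    rw [← LinearMap.ker_eq_bot, LinearMap.ker_eq_bot']
    intro v hv
    have hmem : v ∈ (⨅ j, LinearMap.ker (f j)) := by
      simp only [Submodule.mem_iInf, LinearMap.mem_ker]
      intro k
      have h2 : g v k = 0 := by rw [hv]; rfl
      have h3 : ((g v k : Fin n → ℂ)) = 0 := congrArg Subtype.val h2
      rwa [hgk] at h3
    rw [hker] at hmem
    simpa using hmem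
  -- the surjective sum map S : Π j, range (f j) → ℂⁿ
  set S : (∀ j, LinearMap.range (f j)) →ₗ[ℂ] (Fin n → ℂ) :=
    ∑ j, (LinearMap.range (f j)).subtype ∘ₗ LinearMap.proj j with hS
  have hSapply : ∀ w, S w = ∑ j, (w j : Fin n → ℂ) := by
    intro w
    simp [hS, LinearMap.sum_apply]
  have hSsurj : LinearMap.range S = ⊤ := by
    rw [← top_le_iff, ← hrange]
    apply iSup_le
    intro j x hx
    refine ⟨Pi.single j ⟨x, hx⟩, ?_⟩
    rw [hSapply, Finset.sum_eq_single j]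
    · simp
    · intro k _ hk
      rw [Pi.single_eq_of_ne hk]
      rfl
    · intro h; exact absurd (Finset.mem_univ j) h
  have hcomp : ∀ v, S (g v) = 0 := by
    intro v
    rw [hSapply]
    simp only [hgk]
    exact hfsum v
  -- range g ≤ ker S
  have hle : LinearMap.range g ≤ LinearMap.ker S := by
    rintro x ⟨v, rfl⟩
    exact hcomp v
  -- counting
  have hrn : Module.finrank ℂ (∀ j, LinearMap.range (f j)) =
      Module.finrank ℂ (LinearMap.range S) + Module.finrank ℂ (LinearMap.ker S) :=
    (LinearMap.finrank_range_add_finrank_ker S).symm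
  have h1 : Module.finrank ℂ (LinearMap.range S) = n := by
    rw [hSsurj, finrank_top, Module.finrank_pi]
    simp
  have h2 : n ≤ Module.finrank ℂ (LinearMap.ker S) := by
    have h5 := Submodule.finrank_mono hle
    rw [LinearMap.finrank_range_of_inj hginj, Module.finrank_pi] at h5
    simpa using h5
  have h3 : Module.finrank ℂ (∀ j, LinearMap.range (f j)) =
      ∑ j, Module.finrank ℂ (LinearMap.range (f j)) := Module.finrank_pi_fintype ℂ
  have h4 : ∀ j, (A j - b j • (1 : Matrix (Fin n) (Fin n) ℂ)).rank
      = Module.finrank ℂ (LinearMap.range (f j)) := fun j => rfl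
  calc 2 * n = n + n := by ring
  _ ≤ Module.finrank ℂ (LinearMap.range S) + Module.finrank ℂ (LinearMap.ker S) := by omega
  _ = ∑ j, Module.finrank ℂ (LinearMap.range (f j)) := by rw [← hrn, h3]
  _ = ∑ j, (A j - b j • (1 : Matrix (Fin n) (Fin n) ℂ)).rank :=
      Finset.sum_congr rfl (fun j _ => (h4 j).symm)
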